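/- There exists w ∈ {1, −1} such that χ(α₀^{−1}·𝔭₂) = w·(1 − i)·α₀^{−1}, the right-hand side being computed in ℂ via the fixed embedding of K (note that the fractional ideal α₀^{−1}·𝔭₂ is coprime to f). -/

import Mathlib

open NumberField FractionalIdeal
open scoped nonZeroDivisors

noncomputable section

variable {K : Type*} [Field K] [NumberField K]

/-- The group `I(f)` of invertible fractional ideals of `K` coprime to the modulus `f`:
`a ∈ I(f)` iff `a = b * c⁻¹` with `b, c` integral ideals coprime to `f`. -/
def coprimeIdeals (f : Ideal (𝓞 K)) : Subgroup (FractionalIdeal (𝓞 K)⁰ K)ˣ where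
  carrier := {a | ∃ b c : Ideal (𝓞 K), IsCoprime b f ∧ IsCoprime c f ∧
    (a : FractionalIdeal (𝓞 K)⁰ K) * (c : FractionalIdeal (𝓞 K)⁰ K) =
      (b : FractionalIdeal (𝓞 K)⁰ K)}
  one_mem' := ⟨1, 1, isCoprime_one_left, isCoprime_one_left, by simp⟩
  mul_mem' := by
    rintro a a' ⟨b, c, hb, hc, h⟩ ⟨b', c', hb', hc', h'⟩
    refine ⟨b * b', c * c', hb.mul_left hb', hc.mul_left hc', ?_⟩
    rw [coeIdeal_mul, coeIdeal_mul, Units.val_mul, mul_mul_mul_comm, h, h']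
  inv_mem' := by
    rintro a ⟨b, c, hb, hc, h⟩
    refine ⟨c, b, hc, hb, ?_⟩
    have h1 : ((a⁻¹ : (FractionalIdeal (𝓞 K)⁰ K)ˣ) : FractionalIdeal (𝓞 K)⁰ K) * a = 1 := by
      rw [← Units.val_mul, inv_mul_cancel, Units.val_one]
    calc ((a⁻¹ : (FractionalIdeal (𝓞 K)⁰ K)ˣ) : FractionalIdeal (𝓞 K)⁰ K) * b
        = ((a⁻¹ : (FractionalIdeal (𝓞 K)⁰ K)ˣ) : FractionalIdeal (𝓞 K)⁰ K) *
          ((a : FractionalIdeal (𝓞 K)⁰ K) * c) := by rw [h]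
      _ = c := by rw [← mul_assoc, h1, one_mul]

/-- `χ : I(f) → ℂˣ` is a Hecke character of `K` of type `ε` modulo `f`, i.e.
`χ(αO_K) = ε(α)·α` for every `α = β/γ ∈ K^×` coprime to `f`. -/
def IsHeckeChar [Algebra K ℂ] {f : Ideal (𝓞 K)} (ε : ((𝓞 K) ⧸ f)ˣ →* ℂˣ)
    (χ : coprimeIdeals f →* ℂˣ) : Prop :=
  ∀ β γ : 𝓞 K, IsCoprime (Ideal.span {β}) f → IsCoprime (Ideal.span {γ}) f →
  ∀ u v : ((𝓞 K) ⧸ f)ˣ, (u : (𝓞 K) ⧸ f) = Ideal.Quotient.mk f β →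
    (v : (𝓞 K) ⧸ f) = Ideal.Quotient.mk f γ →
  ∀ a : coprimeIdeals f,
    ((a : (FractionalIdeal (𝓞 K)⁰ K)ˣ) : FractionalIdeal (𝓞 K)⁰ K) =
      spanSingleton (𝓞 K)⁰ (algebraMap (𝓞 K) K β / algebraMap (𝓞 K) K γ) →
    (χ a : ℂ) = (ε u : ℂ) * ((ε v : ℂ))⁻¹ *
      algebraMap K ℂ (algebraMap (𝓞 K) K β / algebraMap (𝓞 K) K γ)

/-- `K(χ)`: the subfield of `ℂ` generated over `K` by the values of `χ`. -/
def heckeField [Algebra K ℂ] {f : Ideal (𝓞 K)} (χ : coprimeIdeals f →* ℂˣ) :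
    IntermediateField K ℂ :=
  IntermediateField.adjoin K (Set.range fun a : coprimeIdeals f => ((χ a : ℂˣ) : ℂ))

/-- `P(f)`: the subgroup of `I(f)` consisting of principal fractional ideals. -/
def principalCoprime (f : Ideal (𝓞 K)) : Subgroup ↥(coprimeIdeals f) :=
  Subgroup.comap (coprimeIdeals f).subtype (toPrincipalIdeal (𝓞 K) K).range

/-- `H(f) = {a ∈ I(f) : a² ∈ P(f)}`. -/
def genusSet (f : Ideal (𝓞 K)) : Set ↥(coprimeIdeals f) :=
  {a | a ^ 2 ∈ principalCoprime f}

/-- `T_g`: the subfield of `ℂ` generated over `K` by the values `χ(a)`, `a ∈ H(f)`. -/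
def genusField [Algebra K ℂ] {f : Ideal (𝓞 K)} (χ : coprimeIdeals f →* ℂˣ) :
    IntermediateField K ℂ :=
  IntermediateField.adjoin K ((fun a => ((χ a : ℂˣ) : ℂ)) '' genusSet f)

/-- `L`: the subfield of `ℂ` generated over `K` by the values of `ε`. -/
def epsField [Algebra K ℂ] {f : Ideal (𝓞 K)} (ε : ((𝓞 K) ⧸ f)ˣ →* ℂˣ) :
    IntermediateField K ℂ :=
  IntermediateField.adjoin K (Set.range fun u => ((ε u : ℂˣ) : ℂ))

lemma chi_mem_heckeField [Algebra K ℂ] {f : Ideal (𝓞 K)} (χ : coprimeIdeals f →* ℂˣ)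
    (a : coprimeIdeals f) : ((χ a : ℂˣ) : ℂ) ∈ heckeField χ :=
  IntermediateField.subset_adjoin K _ ⟨a, rfl⟩

/-- `ξ` is a generator of `μ₂(ε)`, the group of elements of 2-power order
in the image of `ε`. -/
def IsMu2Gen {f : Ideal (𝓞 K)} (ε : ((𝓞 K) ⧸ f)ˣ →* ℂˣ) (ξ : ℂˣ) : Prop :=
  (∃ u, ε u = ξ) ∧ (∃ k : ℕ, ξ ^ 2 ^ k = 1) ∧
  ∀ ζ : ℂˣ, (∃ u, ε u = ζ) → (∃ k : ℕ, ζ ^ 2 ^ k = 1) → ∃ m : ℕ, ζ = ξ ^ m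

/-- Condition (3.6) on `ε`. -/
def Cond36 (D : ℕ) {f : Ideal (𝓞 K)} (ε : ((𝓞 K) ⧸ f)ˣ →* ℂˣ) : Prop :=
  (∀ u, (ε u) ^ 12 = 1) ∧ (¬ 3 ∣ D → ∀ u, (ε u) ^ 4 = 1) ∧
    (¬ 2 ∣ D → ∀ u, (ε u) ^ 6 = 1) ∧ (Nat.gcd 6 D = 1 → ∀ u, (ε u) ^ 2 = 1)

end

set_option maxHeartbeats 2000000 in
set_option synthInstance.maxHeartbeats 400000 in
/-- `χ(α₀⁻¹𝔭₂) = W·(1 − i)·α₀⁻¹` for some sign `W = ±1`,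
where `α₀ = 1 + √−d`. -/
theorem hecke_value_at_p2
    (D d : ℕ) (hD : 4 < D) (hd : d = D / 4) (h4 : 4 ∣ D) (h8 : ¬ 8 ∣ D)
    (K : Type) [Field K] [NumberField K] [Algebra K ℂ]
    (hdeg : Module.finrank ℚ K = 2)
    (hdisc : NumberField.discr K = -(D : ℤ))
    (w : 𝓞 K) (hw : w ^ 2 = -(d : 𝓞 K))
    (hwim : 0 < (algebraMap K ℂ (algebraMap (𝓞 K) K w)).im)
    (hgen : Algebra.adjoin ℤ {w} = ⊤)
    (p2 : Ideal (𝓞 K)) (hp2 : p2 = Ideal.span {2, 1 + w})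
    (f : Ideal (𝓞 K)) (hf : f = p2 ^ 3 * Ideal.span {w})
    (ε : ((𝓞 K) ⧸ f)ˣ →* ℂˣ)
    (hε : ∀ (u : ((𝓞 K) ⧸ f)ˣ) (β : 𝓞 K) (j : ℕ) (n : ℤ),
      (u : (𝓞 K) ⧸ f) = Ideal.Quotient.mk f β →
      β - w ^ j ∈ p2 ^ 3 → β - (n : 𝓞 K) ∈ Ideal.span {w} →
      ((ε u : ℂˣ) : ℂ) = Complex.I ^ j * ((jacobiSym n d : ℤ) : ℂ))
    (χ : coprimeIdeals f →* ℂˣ) (hχ : IsHeckeChar ε χ) :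
    ∃ W : ℂ, (W = 1 ∨ W = -1) ∧
      ∀ a : coprimeIdeals f,
        ((a : (FractionalIdeal (𝓞 K)⁰ K)ˣ) : FractionalIdeal (𝓞 K)⁰ K) =
          spanSingleton (𝓞 K)⁰ ((algebraMap (𝓞 K) K (1 + w))⁻¹) *
            (p2 : FractionalIdeal (𝓞 K)⁰ K) →
        ((χ a : ℂˣ) : ℂ) =
          W * (1 - Complex.I) * (algebraMap K ℂ (algebraMap (𝓞 K) K (1 + w)))⁻¹ := by
  -- basic numerics
  have hDd : D = 4 * d := by omega
  have hodd : d % 2 = 1 := by omega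
  -- Step A : d % 4 = 1
  have hd4 : d % 4 = 1 := by
    by_contra hne
    have hd3 : d % 4 = 3 := by omega
    set e : ℕ := (1 + d) / 4 with he'
    have he : 1 + d = 4 * e := by omega
    set wK : K := algebraMap (𝓞 K) K w with hwK
    have hwK2 : wK ^ 2 = -(d : K) := by
      rw [hwK, ← _root_.map_pow, hw]; push_cast [_root_.map_neg, _root_.map_natCast]; ring
    have hdK : (d : K) = 4 * (e : K) - 1 := by
      have h := congrArg (fun n : ℕ => (n : K)) he
      push_cast at h; linear_combination h
    set y : K := (1 + wK) / 2 with hy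
    have hyint : IsIntegral ℤ y := by
      refine ⟨Polynomial.X ^ 2 - Polynomial.X + Polynomial.C (e : ℤ), ?_, ?_⟩
      · monicity!
      · simp only [Polynomial.eval₂_add, Polynomial.eval₂_sub, Polynomial.eval₂_pow,
          Polynomial.eval₂_X, Polynomial.eval₂_C, hy]
        push_cast
        linear_combination (1/4 : K) * hwK2 - (1/4 : K) * hdK
    obtain ⟨z, hz⟩ : ∃ z : 𝓞 K, algebraMap (𝓞 K) K z = y := ⟨⟨y, hyint⟩, rfl⟩
    have h2z : 2 * z = 1 + w := by
      apply NumberField.RingOfIntegers.coe_injective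
      push_cast [_root_.map_mul, _root_.map_add, _root_.map_one, _root_.map_ofNat, hz]
      rw [hy]; field_simp; rw [hwK]
    have hzmem : z ∈ Algebra.adjoin ℤ ({w} : Set (𝓞 K)) := by rw [hgen]; trivial
    set Wc : ℂ := algebraMap K ℂ wK with hWc
    have hWc2 : Wc ^ 2 = -(d : ℂ) := by
      rw [hWc, ← _root_.map_pow, hwK2]; push_cast [_root_.map_neg, _root_.map_natCast]; ring
    have key : ∀ x : 𝓞 K, x ∈ Algebra.adjoin ℤ ({w} : Set (𝓞 K)) →
        ∃ a b : ℤ, (algebraMap K ℂ) (algebraMap (𝓞 K) K x) = (a : ℂ) + (b : ℂ) * Wc := by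
      intro x hx
      refine Algebra.adjoin_induction ?_ ?_ ?_ ?_ hx
      · rintro x rfl
        exact ⟨0, 1, by simp [hWc, hwK]⟩
      · intro r; exact ⟨r, 0, by simp [_root_.map_intCast]⟩
      · rintro x y - - ⟨a, b, h1⟩ ⟨a', b', h2⟩
        exact ⟨a + a', b + b', by push_cast [_root_.map_add, h1, h2]; ring⟩
      · rintro x y - - ⟨a, b, h1⟩ ⟨a', b', h2⟩
        refine ⟨a * a' - d * b * b', a * b' + a' * b, ?_⟩
        push_cast [_root_.map_mul, h1, h2]
        linear_combination (b : ℂ) * (b' : ℂ) * hWc2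
    obtain ⟨a, b, hab⟩ := key z hzmem
    have h2y : (2 : ℂ) * ((a : ℂ) + (b : ℂ) * Wc) = 1 + Wc := by
      rw [← hab, ← _root_.map_ofNat (algebraMap K ℂ) 2, ← _root_.map_mul,
        ← _root_.map_ofNat (algebraMap (𝓞 K) K) 2, ← _root_.map_mul, h2z]
      push_cast [_root_.map_add, _root_.map_one]; ring
    have him : (2 * (b : ℝ) - 1) * Wc.im = 0 := by
      have h := congrArg Complex.im h2y
      simp only [Complex.mul_im, Complex.add_im, Complex.add_re, Complex.one_im, Complex.one_re,
        Complex.intCast_im, Complex.intCast_re, Complex.re_ofNat, Complex.im_ofNat] at h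
      ring_nf at h ⊢
      linarith [h]
    have hWim : Wc.im ≠ 0 := ne_of_gt (by rw [hWc]; exact hwim)
    have hb : (2 * (b : ℝ) - 1) = 0 := by
      rcases mul_eq_zero.mp him with h | h
      · exact h
      · exact absurd h hWim
    have hb1 : ((2 * b - 1 : ℤ) : ℝ) = 0 := by push_cast; linarith
    have hb2 : (2 * b - 1 : ℤ) = 0 := by exact_mod_cast hb1
    omega
  -- basic elements and ideal facts
  obtain ⟨e, he⟩ : ∃ e : ℕ, d = 4 * e + 1 := ⟨d / 4, by omega⟩
  have hdO : (d : 𝓞 K) = 4 * (e : 𝓞 K) + 1 := by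
    exact_mod_cast congrArg (fun n : ℕ => (n : 𝓞 K)) he
  have h2p2 : (2 : 𝓞 K) ∈ p2 := by
    rw [hp2]; exact Ideal.subset_span (Set.mem_insert _ _)
  have hwp2 : (1 + w) ∈ p2 := by
    rw [hp2]; exact Ideal.subset_span (Set.mem_insert_of_mem _ rfl)
  have p2sq : p2 ^ 2 = Ideal.span {(2 : 𝓞 K)} := by
    apply le_antisymm
    · rw [sq, hp2, Ideal.mul_le]
      intro r hr s hs
      rw [Ideal.mem_span_pair] at hr hs
      obtain ⟨x, y, rfl⟩ := hr
      obtain ⟨x', y', rfl⟩ := hs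
      rw [Ideal.mem_span_singleton]
      refine ⟨2*x*x' + x*y'*(1+w) + y*x'*(1+w) + y*y'*(w - 2*e), ?_⟩
      linear_combination (y * y') * hw - (y * y') * hdO
    · rw [Ideal.span_le, Set.singleton_subset_iff, sq]
      have key : (2 : 𝓞 K) = 2*(1+w) - (1+w)*(1+w) - (e : 𝓞 K)*(2*2) := by
        linear_combination hw - hdO
      rw [key]
      exact sub_mem (sub_mem (Ideal.mul_mem_mul h2p2 hwp2) (Ideal.mul_mem_mul hwp2 hwp2))
        (Ideal.mul_mem_left _ _ (Ideal.mul_mem_mul h2p2 h2p2))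
  set β : 𝓞 K := w - 2 * (e : 𝓞 K) with hβ
  have copβ : IsCoprime (Ideal.span {β}) f := by
    have cβp2 : IsCoprime (Ideal.span {β}) p2 := by
      rw [Ideal.isCoprime_iff_exists]
      refine ⟨-β, Ideal.mem_span_singleton.mpr ⟨-1, by ring⟩,
        (1 + w) - (e : 𝓞 K) * 2, sub_mem hwp2 (Ideal.mul_mem_left _ _ h2p2), by rw [hβ]; ring⟩
    have cβw : IsCoprime (Ideal.span {β}) (Ideal.span {w}) := by
      rw [Ideal.isCoprime_iff_exists]
      refine ⟨2 * β, Ideal.mem_span_singleton.mpr ⟨2, mul_comm _ _⟩,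
        w * (-2 - w), Ideal.mem_span_singleton.mpr ⟨-2 - w, rfl⟩, ?_⟩
      rw [hβ]; linear_combination -hw + hdO
    rw [hf]; exact (cβp2.pow_right).mul_right cβw
  have cop1 : IsCoprime (Ideal.span {(1 : 𝓞 K)}) f := by
    rw [Ideal.span_singleton_one, ← Ideal.one_eq_top]; exact isCoprime_one_left
  -- the unit u with value mk f β
  obtain ⟨i, hi, j, hj, hij⟩ := Ideal.isCoprime_iff_exists.mp copβ
  obtain ⟨c, hc⟩ := Ideal.mem_span_singleton'.mp hi
  have hcu : (Ideal.Quotient.mk f β) * (Ideal.Quotient.mk f c) = 1 := by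
    rw [← _root_.map_mul, mul_comm β c, hc]
    have : Ideal.Quotient.mk f j = 0 := Ideal.Quotient.eq_zero_iff_mem.mpr hj
    have hii : i = 1 - j := by linear_combination hij
    rw [hii, _root_.map_sub, this, _root_.map_one, sub_zero]
  set u : ((𝓞 K) ⧸ f)ˣ := ⟨Ideal.Quotient.mk f β, Ideal.Quotient.mk f c, hcu,
    by rw [mul_comm]; exact hcu⟩ with hu'
  have hu : (u : (𝓞 K) ⧸ f) = Ideal.Quotient.mk f β := rfl
  have hv : ((1 : ((𝓞 K) ⧸ f)ˣ) : (𝓞 K) ⧸ f) = Ideal.Quotient.mk f 1 := by simp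
  -- β - n ∈ (w)
  set n : ℤ := -(2 * (e:ℤ)) with hn
  have hβn : β - (n : 𝓞 K) ∈ Ideal.span {w} := by
    have : β - (n : 𝓞 K) = w := by rw [hβ, hn]; push_cast; ring
    rw [this]; exact Ideal.mem_span_singleton_self _
  -- Jacobi symbol computation
  have h8' : d % 8 = 1 ∨ d % 8 = 5 := by omega
  have hodd' : Odd d := ⟨2 * e, by omega⟩
  have keyJ : jacobiSym 2 d * jacobiSym n d = 1 := by
    rw [← jacobiSym.mul_left]
    have h2 : (2 * n : ℤ) = 1 - d := by rw [hn]; push_cast [he]; ring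
    have h1 : (2 * n) % (d : ℤ) = 1 % (d : ℤ) := by rw [h2]; simp [Int.sub_emod]
    rw [jacobiSym.mod_left, h1, ← jacobiSym.mod_left, jacobiSym.one_left]
  have hJ2 : jacobiSym 2 d = (ZMod.χ₈ d : ℤ) := jacobiSym.at_two hodd'
  have hne2 : ¬ d % 2 = 0 := by omega
  -- ε(u) = I
  have h2sq : (2 : 𝓞 K) ∈ p2 ^ 2 := by rw [p2sq]; exact Ideal.mem_span_singleton_self _
  have hp3 : p2 ^ 3 = p2 ^ 2 * p2 := by ring
  have hεu : ((ε u : ℂˣ) : ℂ) = Complex.I := by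
    rcases h8' with h8c | h8c
    · -- d % 8 = 1, e even, j = 1
      obtain ⟨e', hee⟩ : ∃ e', e = 2 * e' := ⟨e / 2, by omega⟩
      have hmem : β - w ^ 1 ∈ p2 ^ 3 := by
        have hh : β - w ^ 1 = (-(e' : 𝓞 K)) * (2 * 2) := by rw [hβ, hee]; push_cast; ring
        rw [hh, hp3]
        exact Ideal.mul_mem_left _ _ (Ideal.mul_mem_mul h2sq h2p2)
      have hJ : jacobiSym n d = 1 := by
        have hχ8 : (ZMod.χ₈ d : ℤ) = 1 := by
          rw [ZMod.χ₈_nat_eq_if_mod_eight]; simp [h8c, hne2]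
        rw [hJ2, hχ8, one_mul] at keyJ; exact keyJ
      rw [hε u β 1 n hu hmem hβn, hJ]
      norm_num
    · -- d % 8 = 5, e odd, j = 3
      obtain ⟨k, hek⟩ : ∃ k, e = 2 * k + 1 := ⟨e / 2, by omega⟩
      have heO : (e : 𝓞 K) = 2 * (k : 𝓞 K) + 1 := by
        exact_mod_cast congrArg (fun m : ℕ => (m : 𝓞 K)) hek
      have hmem : β - w ^ 3 ∈ p2 ^ 3 := by
        set X : 𝓞 K := (1 + w) + 2 * ((2 * (k : 𝓞 K) + 1) * w - ((k : 𝓞 K) + 1)) with hX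
        have hXp2 : X ∈ p2 := add_mem hwp2 (Ideal.mul_mem_right _ _ h2p2)
        have hkey : β - w ^ 3 = 2 * X := by
          rw [hβ, hX]
          linear_combination (-w) * hw + w * hdO + (4 * w - 2) * heO
        rw [hkey, hp3]
        exact Ideal.mul_mem_mul h2sq hXp2
      have hJ : jacobiSym n d = -1 := by
        have hχ8 : (ZMod.χ₈ d : ℤ) = -1 := by
          rw [ZMod.χ₈_nat_eq_if_mod_eight]
          have h1 : ¬ d % 8 = 1 := by omega
          have h7 : ¬ d % 8 = 7 := by omega
          simp [h1, h7, hne2]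
        rw [hJ2, hχ8] at keyJ; linarith
      rw [hε u β 3 n hu hmem hβn, hJ]
      simp [pow_succ, Complex.I_mul_I]
  -- complex quantities
  set A : ℂ := algebraMap K ℂ (algebraMap (𝓞 K) K (1 + w)) with hA
  set B : ℂ := algebraMap K ℂ (algebraMap (𝓞 K) K β) with hB
  have hsqO : (1 + w) ^ 2 = 2 * β := by rw [hβ]; linear_combination hw - hdO
  have hsqK : (algebraMap (𝓞 K) K (1 + w)) ^ 2 = 2 * algebraMap (𝓞 K) K β := by
    rw [← _root_.map_pow, hsqO, _root_.map_mul, _root_.map_ofNat]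
  have hsqC : A ^ 2 = 2 * B := by
    rw [hA, hB, ← _root_.map_pow, hsqK, _root_.map_mul, _root_.map_ofNat]
  have hA0 : A ≠ 0 := by
    intro h0
    have him : A.im = (algebraMap K ℂ (algebraMap (𝓞 K) K w)).im := by
      rw [hA, _root_.map_add, _root_.map_add, _root_.map_one, _root_.map_one]
      simp [Complex.add_im]
    rw [h0] at him
    simp only [Complex.zero_im] at him
    exact absurd him.symm (ne_of_gt hwim)
  have hB0 : B ≠ 0 := by
    intro h0
    apply hA0
    have : A ^ 2 = 0 := by rw [hsqC, h0, mul_zero]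
    exact pow_eq_zero_iff (by norm_num) |>.mp this
  have haK0 : (algebraMap (𝓞 K) K (1 + w)) ≠ 0 := by
    intro h0; apply hA0; rw [hA, h0, _root_.map_zero]
  have hbK0 : (algebraMap (𝓞 K) K β) ≠ 0 := by
    intro h0; apply hB0; rw [hB, h0, _root_.map_zero]
  -- main case split
  by_cases hex : ∃ a : coprimeIdeals f,
      ((a : (FractionalIdeal (𝓞 K)⁰ K)ˣ) : FractionalIdeal (𝓞 K)⁰ K) =
        spanSingleton (𝓞 K)⁰ ((algebraMap (𝓞 K) K (1 + w))⁻¹) *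
          (p2 : FractionalIdeal (𝓞 K)⁰ K)
  swap
  · exact ⟨1, Or.inl rfl, fun a ha => absurd ⟨a, ha⟩ hex⟩
  obtain ⟨a₀, ha₀⟩ := hex
  -- the square of a₀ inverse is spanSingleton (β)
  set F := FractionalIdeal (𝓞 K)⁰ K
  set uu : Fˣ := (a₀ : Fˣ) with huu
  have hX2 : ((uu : Fˣ) : F) ^ 2 = spanSingleton (𝓞 K)⁰ ((algebraMap (𝓞 K) K β)⁻¹) := by
    rw [ha₀, mul_pow, spanSingleton_pow, ← coeIdeal_pow, p2sq, coeIdeal_span_singleton,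
      spanSingleton_mul_spanSingleton]
    congr 1
    rw [_root_.map_ofNat, inv_pow]
    rw [inv_mul_eq_iff_eq_mul₀ (pow_ne_zero 2 haK0), eq_comm, mul_inv_eq_iff_eq_mul₀ hbK0]
    exact hsqK
  have hval : (((uu⁻¹ ^ 2 : Fˣ) : Fˣ) : F) = spanSingleton (𝓞 K)⁰ (algebraMap (𝓞 K) K β) := by
    have h1 : (((uu⁻¹ ^ 2 : Fˣ)) : F) * ((uu ^ 2 : Fˣ) : F) = 1 := by
      rw [← Units.val_mul]
      norm_num
    have h2 : ((uu ^ 2 : Fˣ) : F) = spanSingleton (𝓞 K)⁰ ((algebraMap (𝓞 K) K β)⁻¹) := by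
      rw [Units.val_pow_eq_pow_val, hX2]
    have h3 : ((uu ^ 2 : Fˣ) : F) * spanSingleton (𝓞 K)⁰ (algebraMap (𝓞 K) K β) = 1 := by
      rw [h2, spanSingleton_mul_spanSingleton, inv_mul_cancel₀ hbK0, spanSingleton_one]
    calc (((uu⁻¹ ^ 2 : Fˣ)) : F)
        = (((uu⁻¹ ^ 2 : Fˣ)) : F) * (((uu ^ 2 : Fˣ) : F) *
          spanSingleton (𝓞 K)⁰ (algebraMap (𝓞 K) K β)) := by rw [h3, mul_one]
      _ = ((((uu⁻¹ ^ 2 : Fˣ)) : F) * ((uu ^ 2 : Fˣ) : F)) *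
          spanSingleton (𝓞 K)⁰ (algebraMap (𝓞 K) K β) := by ring
      _ = spanSingleton (𝓞 K)⁰ (algebraMap (𝓞 K) K β) := by rw [h1, one_mul]
  -- apply the Hecke property to a₀⁻¹ ^ 2
  have hcoe : (((a₀⁻¹ ^ 2 : coprimeIdeals f) : Fˣ) : F) = (((uu⁻¹ ^ 2 : Fˣ)) : F) := by
    norm_cast
  have hχval := hχ β 1 copβ cop1 u 1 hu hv (a₀⁻¹ ^ 2) (by
    rw [hcoe, hval, _root_.map_one, _root_.div_one])
  rw [_root_.map_one, _root_.map_pow, _root_.map_inv] at hχval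
  simp only [_root_.map_one, _root_.div_one, Units.val_one, inv_one, mul_one, hεu] at hχval
  have hχ2 : ((χ a₀ : ℂˣ) : ℂ)⁻¹ ^ 2 = Complex.I * B := by
    rw [← hB] at hχval
    rw [← hχval, Units.val_pow_eq_pow_val, Units.val_inv_eq_inv_val]
  obtain ⟨ccc, hccc⟩ : ∃ ccc : ℂ, ccc = ((χ a₀ : ℂˣ) : ℂ) := ⟨_, rfl⟩
  rw [← hccc] at hχ2
  have hc0 : ccc ≠ 0 := by rw [hccc]; exact Units.ne_zero _
  have hI : Complex.I * B ≠ 0 := mul_ne_zero Complex.I_ne_zero hB0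
  have hc2 : ccc ^ 2 = (Complex.I * B)⁻¹ := by
    rw [← hχ2, inv_pow, inv_inv]
  obtain ⟨t, ht⟩ : ∃ t : ℂ, t = (1 - Complex.I) * A⁻¹ := ⟨_, rfl⟩
  have h1I : (1 - Complex.I) ≠ 0 := by
    intro h0
    have := congrArg Complex.im h0
    simp at this
  have ht0 : t ≠ 0 := by rw [ht]; exact mul_ne_zero h1I (inv_ne_zero hA0)
  have ht2 : t ^ 2 = ccc ^ 2 := by
    rw [ht, hc2, mul_pow, inv_pow]
    rw [hsqC]
    have hIsq : (1 - Complex.I) ^ 2 = -2 * Complex.I := by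
      linear_combination Complex.I_sq
    rw [hIsq]
    field_simp
    linear_combination (-1 : ℂ) * Complex.I_sq
  refine ⟨ccc * t⁻¹, ?_, ?_⟩
  · rw [← mul_self_eq_one_iff]
    have : ccc * t⁻¹ * (ccc * t⁻¹) = ccc ^ 2 * (t ^ 2)⁻¹ := by ring
    rw [this, ht2]
    exact mul_inv_cancel₀ (pow_ne_zero 2 hc0)
  · intro a ha
    have haa : a = a₀ := by
      apply Subtype.ext
      apply Units.ext
      rw [ha, ha₀]
    rw [haa, ← hccc, mul_assoc, ← ht]
    exact (inv_mul_cancel_right₀ ht0 ccc).symm
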